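/- arXiv:2112.15226 — 3 statements merged into one kernel-verified Lean document; each statement's English description precedes it below -/
import Mathlib

section
/- For every complex z with Re(z) > 0, √(2π) · z^{-3/2} · λ(z) = ∫_0^∞ e^{-zξ} (q_+(ξ) - q_-(ξ)) dξ, where for ξ > 0, q_-(ξ) < q_+(ξ) are the two positive real roots of q - log q - 1 = ξ, and λ(z) = Γ(z)/(√(2π) z^{z-1/2} e^{-z}). -/
open MeasureTheory Set Filter Complex

/-! Auxiliary lemmas (verified separately) -/

lemma aux_int_rpow_exp {s δ : ℝ} (hs : -1 < s) (hδ : 0 < δ) :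
    IntegrableOn (fun q : ℝ => q ^ s * Real.exp (-(δ * q))) (Set.Ioi 0) := by
  have h0 : IntegrableOn (fun x : ℝ => Real.exp (-x) * x ^ (s + 1 - 1)) (Set.Ioi 0) :=
    Real.GammaIntegral_convergent (by linarith)
  have h1 : IntegrableOn (fun x : ℝ => Real.exp (-(δ * x)) * (δ * x) ^ (s + 1 - 1))
      (Set.Ioi 0) := by
    have := (integrableOn_Ioi_comp_mul_left_iff
      (fun x : ℝ => Real.exp (-x) * x ^ (s + 1 - 1)) 0 hδ).2 (by simpa using h0)
    simpa using this
  have h2 := h1.const_mul (δ ^ s)⁻¹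
  apply (integrableOn_congr_fun ?_ measurableSet_Ioi).2 h2
  intro x hx
  simp only [mem_Ioi] at hx
  simp only [Real.mul_rpow hδ.le hx.le, add_sub_cancel_right]
  have : δ ^ s ≠ 0 := (Real.rpow_pos_of_pos hδ s).ne'
  field_simp

lemma aux_phi_nonneg {q : ℝ} (hq : 0 < q) : 0 ≤ q - Real.log q - 1 := by
  have := Real.log_le_sub_one_of_pos hq; linarith

lemma aux_phi_mono {a b : ℝ} (ha : 1 ≤ a) (hab : a < b) :
    a - Real.log a - 1 < b - Real.log b - 1 := by
  have ha0 : 0 < a := by linarith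
  have hb0 : 0 < b := by linarith
  have h1 : Real.log b - Real.log a = Real.log (b / a) := (Real.log_div hb0.ne' ha0.ne').symm
  have h2 : Real.log (b / a) < b / a - 1 :=
    Real.log_lt_sub_one_of_pos (by positivity) (by
      intro h; have : b = a := by field_simp at h; linarith
      linarith)
  have h3 : b / a - 1 ≤ b - a := by
    rw [div_sub_one ha0.ne', div_le_iff₀ ha0]
    nlinarith
  linarith

lemma aux_phi_anti {a b : ℝ} (ha : 0 < a) (hab : a < b) (hb : b ≤ 1) :
    b - Real.log b - 1 < a - Real.log a - 1 := by
  have hb0 : 0 < b := by linarith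
  have h1 : Real.log a - Real.log b = Real.log (a / b) := (Real.log_div ha.ne' hb0.ne').symm
  have h2 : Real.log (a / b) < a / b - 1 :=
    Real.log_lt_sub_one_of_pos (by positivity) (by
      intro h; have : a = b := by field_simp at h; linarith
      linarith)
  have h4 : a / b - 1 = (a - b) / b := by field_simp
  have h5 : (a - b) / b ≤ (a - b) := by
    rw [div_le_iff₀ hb0]
    nlinarith
  linarith

lemma aux_interval {ξ qmv qpv : ℝ} (hξ : 0 < ξ) (hm : 0 < qmv) (hlt : qmv < qpv)
    (em : qmv - Real.log qmv - 1 = ξ) (ep : qpv - Real.log qpv - 1 = ξ) :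
    qmv < 1 ∧ 1 < qpv ∧
      ∀ q : ℝ, 0 < q → (q - Real.log q - 1 ≤ ξ ↔ q ∈ Set.Icc qmv qpv) := by
  have hp1 : 1 < qpv := by
    by_contra h
    push_neg at h
    have := aux_phi_anti hm hlt h
    linarith
  have hm1 : qmv < 1 := by
    by_contra h
    push_neg at h
    have := aux_phi_mono h hlt
    linarith
  refine ⟨hm1, hp1, fun q hq => ⟨fun hle => ?_, fun hmem => ?_⟩⟩
  · constructor
    · by_contra h
      push_neg at h
      have := aux_phi_anti hq h hm1.le
      linarith
    · by_contra h
      push_neg at h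
      have := aux_phi_mono hp1.le h
      linarith
  · obtain ⟨h1, h2⟩ := hmem
    rcases le_or_gt q 1 with hq1 | hq1
    · rcases eq_or_lt_of_le h1 with rfl | h1'
      · linarith
      · have := aux_phi_anti hm h1' hq1
        linarith
    · rcases eq_or_lt_of_le h2 with rfl | h2'
      · linarith
      · have := aux_phi_mono hq1.le h2'
        linarith

lemma aux_meas {z w : ℂ} :
    AEStronglyMeasurable (fun q : ℝ => (q : ℂ) ^ z * Complex.exp (-(w * q)))
      (volume.restrict (Set.Ioi (0:ℝ))) := by
  apply ContinuousOn.aestronglyMeasurable ?_ measurableSet_Ioi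
  intro q hq
  simp only [Set.mem_Ioi] at hq
  apply ContinuousWithinAt.mul
  · exact (Complex.continuousAt_ofReal_cpow_const q z (Or.inr hq.ne')).continuousWithinAt
  · exact (Complex.continuous_exp.comp (by continuity)).continuousWithinAt

lemma aux_norm {z w : ℂ} {q : ℝ} (hq : 0 < q) :
    ‖(q : ℂ) ^ z * Complex.exp (-(w * q))‖ = q ^ z.re * Real.exp (-(w.re * q)) := by
  rw [norm_mul, Complex.norm_exp,
    Complex.norm_cpow_eq_rpow_re_of_pos hq]
  congr 2
  simp [Complex.mul_re]

lemma aux_integrable {z w : ℂ} (hz : 0 < z.re) (hw : 0 < w.re) :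
    IntegrableOn (fun q : ℝ => (q : ℂ) ^ z * Complex.exp (-(w * q))) (Set.Ioi 0) := by
  apply Integrable.mono' (aux_int_rpow_exp (by linarith : (-1:ℝ) < z.re) hw) aux_meas
  filter_upwards [ae_restrict_mem measurableSet_Ioi] with q hq
  rw [aux_norm hq]

lemma aux_gamma_scale {z : ℂ} (hz : 0 < z.re) :
    ∀ w : ℂ, 0 < w.re →
      ∫ q in Set.Ioi (0:ℝ), (q : ℂ) ^ z * Complex.exp (-(w * q)) =
        Complex.Gamma (z + 1) * w ^ (-(z + 1)) := by
  set U : Set ℂ := {w : ℂ | 0 < w.re} with hU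
  have hUopen : IsOpen U := isOpen_lt continuous_const Complex.continuous_re
  set f : ℂ → ℂ := fun w => ∫ q in Set.Ioi (0:ℝ), (q : ℂ) ^ z * Complex.exp (-(w * q)) with hf
  set g : ℂ → ℂ := fun w => Complex.Gamma (z + 1) * w ^ (-(z + 1)) with hg
  have hfd : DifferentiableOn ℂ f U := by
    intro w₀ hw₀
    have hw₀re : 0 < w₀.re := hw₀
    set ε : ℝ := w₀.re / 2 with hε
    have hεpos : 0 < ε := by positivity
    have key := hasDerivAt_integral_of_dominated_loc_of_deriv_le (μ := volume.restrict (Set.Ioi (0:ℝ)))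
      (F := fun w (q : ℝ) => (q : ℂ) ^ z * Complex.exp (-(w * q)))
      (F' := fun w (q : ℝ) => (q : ℂ) ^ z * (Complex.exp (-(w * q)) * -(q : ℂ)))
      (x₀ := w₀) (bound := fun q : ℝ => q ^ (z.re + 1) * Real.exp (-(ε * q)))
      (Metric.ball_mem_nhds w₀ hεpos)
      (Filter.Eventually.of_forall fun w => aux_meas)
      (aux_integrable hz hw₀re)
      (by
        apply ContinuousOn.aestronglyMeasurable ?_ measurableSet_Ioi
        intro q hq
        simp only [Set.mem_Ioi] at hq
        apply ContinuousWithinAt.mul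
        · exact (Complex.continuousAt_ofReal_cpow_const q z (Or.inr hq.ne')).continuousWithinAt
        · exact (((Complex.continuous_exp.comp (by continuity)).mul (by continuity))).continuousWithinAt)
      (by
        filter_upwards [ae_restrict_mem measurableSet_Ioi] with q hq w hwball
        simp only [Set.mem_Ioi] at hq
        have hwre : ε ≤ w.re := by
          have h1 : |w.re - w₀.re| ≤ ‖w - w₀‖ := by
            rw [← Complex.sub_re]; exact Complex.abs_re_le_norm _
          have h2 : ‖w - w₀‖ < ε := by
            rwa [Metric.mem_ball, Complex.dist_eq] at hwball
          have := abs_sub_lt_iff.mp (lt_of_le_of_lt h1 h2)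
          simp only [hε] at *
          linarith [this.2]
        rw [norm_mul, norm_mul, norm_neg,
          Complex.norm_cpow_eq_rpow_re_of_pos hq, Complex.norm_exp]
        have h3 : (-(w * q)).re = -(w.re * q) := by simp [Complex.mul_re]
        rw [h3]
        have h4 : ‖(q : ℂ)‖ = q := by
          rw [Complex.norm_real, Real.norm_of_nonneg hq.le]
        rw [h4, Real.rpow_add_one hq.ne']
        have h5 : Real.exp (-(w.re * q)) ≤ Real.exp (-(ε * q)) := by
          apply Real.exp_le_exp.2
          nlinarith
        calc q ^ z.re * (Real.exp (-(w.re * q)) * q)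
            = q ^ z.re * Real.exp (-(w.re * q)) * q := by ring
          _
            ≤ q ^ z.re * Real.exp (-(ε * q)) * q := by
              apply mul_le_mul_of_nonneg_right (mul_le_mul_of_nonneg_left h5 (by positivity)) hq.le
          _ = q ^ z.re * q * Real.exp (-(ε * q)) := by ring)
      (aux_int_rpow_exp (by linarith : (-1:ℝ) < z.re + 1) hεpos)
      (by
        filter_upwards [ae_restrict_mem measurableSet_Ioi] with q hq w hwball
        have h1 : HasDerivAt (fun w : ℂ => -(w * q)) (-(q : ℂ)) w := by
          simpa [Pi.neg_def] using ((hasDerivAt_id w).mul_const (q : ℂ)).neg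
        exact (h1.cexp).const_mul _)
    exact key.2.differentiableAt.differentiableWithinAt
  have hgd : DifferentiableOn ℂ g U := by
    intro w₀ hw₀
    have : w₀ ∈ Complex.slitPlane := Or.inl hw₀
    exact (((hasDerivAt_id w₀).cpow_const this).differentiableAt.const_mul _).differentiableWithinAt
  have hfa : AnalyticOnNhd ℂ f U := hfd.analyticOnNhd hUopen
  have hga : AnalyticOnNhd ℂ g U := hgd.analyticOnNhd hUopen
  have hUconn : IsPreconnected U := (convex_halfSpace_re_gt 0).isPreconnected
  have h1U : (1 : ℂ) ∈ U := by simp [hU]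
  have hreal : ∀ r : ℝ, 0 < r → f r = g r := by
    intro r hr
    have h := Complex.integral_cpow_mul_exp_neg_mul_Ioi (a := z + 1)
      (by simp only [Complex.add_re, Complex.one_re]; linarith) hr
    simp only [add_sub_cancel_right] at h
    have harg : Complex.arg r ≠ Real.pi := by
      rw [Complex.arg_ofReal_of_nonneg hr.le]
      exact Real.pi_ne_zero.symm
    calc ∫ q in Set.Ioi (0:ℝ), (q : ℂ) ^ z * Complex.exp (-((r:ℂ) * q))
        = (1 / (r:ℂ)) ^ (z+1) * Complex.Gamma (z+1) := h
      _ = Complex.Gamma (z + 1) * (r:ℂ) ^ (-(z + 1)) := by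
          rw [one_div, Complex.inv_cpow _ _ harg, ← Complex.cpow_neg, mul_comm]
  have hfreq : ∃ᶠ w in nhdsWithin (1 : ℂ) {(1:ℂ)}ᶜ, f w = g w := by
    have htend : Filter.Tendsto (fun n : ℕ => ((1 + 1/(n+1) : ℝ) : ℂ)) Filter.atTop
        (nhdsWithin (1 : ℂ) {(1:ℂ)}ᶜ) := by
      rw [tendsto_nhdsWithin_iff]
      constructor
      · have : Filter.Tendsto (fun n : ℕ => (1 + 1/(n+1) : ℝ)) Filter.atTop (nhds 1) := by
          have := tendsto_one_div_add_atTop_nhds_zero_nat (𝕜 := ℝ)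
          simpa using (tendsto_const_nhds (x := (1:ℝ))).add this
        have h2 : Filter.Tendsto (fun n : ℕ => ((1 + 1/(n+1) : ℝ) : ℂ)) Filter.atTop
            (nhds ((1:ℝ):ℂ)) := (Complex.continuous_ofReal.tendsto 1).comp this
        simpa using h2
      · apply Filter.Eventually.of_forall
        intro n
        simp only [Set.mem_compl_iff, Set.mem_singleton_iff]
        intro h
        have : (1 + 1/(n+1) : ℝ) = 1 := by exact_mod_cast h
        have : (1 : ℝ)/(n+1) > 0 := by positivity
        linarith
    apply htend.frequently
    apply Filter.Frequently.of_forall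
    intro n
    exact hreal _ (by positivity)
  have := hfa.eqOn_of_preconnected_of_frequently_eq hga hUconn h1U hfreq
  intro w hw
  exact this hw

lemma aux_cexp_norm (z : ℂ) (ξ : ℝ) :
    ‖Complex.exp (-(z * ξ))‖ = Real.exp (-(z.re * ξ)) := by
  rw [Complex.norm_exp]
  congr 1
  simp [Complex.mul_re]

lemma aux_cexp_int {z : ℂ} (hz : 0 < z.re) (a : ℝ) :
    IntegrableOn (fun ξ : ℝ => Complex.exp (-(z * ξ))) (Set.Ioi a) := by
  apply Integrable.mono' (exp_neg_integrableOn_Ioi a hz)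
    ((Complex.continuous_exp.comp (by continuity)).aestronglyMeasurable)
  filter_upwards with ξ
  simp only [Function.comp_apply]
  rw [aux_cexp_norm, neg_mul]

lemma aux_cexp_Ioi {z : ℂ} (hz : 0 < z.re) (a : ℝ) :
    ∫ ξ in Set.Ioi a, Complex.exp (-(z * ξ)) = Complex.exp (-(z * a)) / z := by
  have hz0 : z ≠ 0 := by intro h; rw [h] at hz; simp at hz
  have hderiv : ∀ ξ ∈ Set.Ici a, HasDerivAt (fun ξ : ℝ => -(Complex.exp (-(z * ξ)) / z))
      (Complex.exp (-(z * ξ))) ξ := by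
    intro ξ _
    have h2 : HasDerivAt (fun w : ℂ => -(z * w)) (-z) (ξ:ℂ) := by
      simpa [Pi.neg_def] using ((hasDerivAt_id (ξ:ℂ)).const_mul z).neg
    have h3 := (h2.cexp.div_const z).neg
    rw [Pi.neg_def] at h3
    have h1 : HasDerivAt (fun w : ℂ => -(Complex.exp (-(z * w)) / z))
        (Complex.exp (-(z * ξ))) (ξ:ℂ) := by
      refine h3.congr_deriv ?_
      rw [mul_neg, neg_div, neg_neg, mul_div_assoc, div_self hz0, mul_one]
    exact h1.comp_ofReal
  have htend : Filter.Tendsto (fun ξ : ℝ => -(Complex.exp (-(z * ξ)) / z)) Filter.atTop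
      (nhds 0) := by
    apply squeeze_zero_norm (a := fun ξ : ℝ => Real.exp (-(z.re * ξ)) / ‖z‖)
      (fun ξ => by rw [norm_neg, norm_div, aux_cexp_norm])
    have h1 : Filter.Tendsto (fun ξ : ℝ => z.re * ξ) Filter.atTop Filter.atTop :=
      Filter.Tendsto.const_mul_atTop hz Filter.tendsto_id
    have h2 := (Real.tendsto_exp_neg_atTop_nhds_zero.comp h1).div_const ‖z‖
    simpa [Function.comp] using h2
  have := integral_Ioi_of_hasDerivAt_of_tendsto' hderiv (aux_cexp_int hz a) htend
  rw [this]
  ring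

lemma aux_rexp_Ioi {c : ℝ} (hc : 0 < c) (a : ℝ) :
    ∫ ξ in Set.Ioi a, Real.exp (-(c * ξ)) = Real.exp (-(c * a)) / c := by
  have hderiv : ∀ ξ ∈ Set.Ici a, HasDerivAt (fun ξ : ℝ => -(Real.exp (-(c * ξ)) / c))
      (Real.exp (-(c * ξ))) ξ := by
    intro ξ _
    have h2 : HasDerivAt (fun ξ : ℝ => -(c * ξ)) (-c) ξ := by
      simpa [Pi.neg_def] using ((hasDerivAt_id ξ).const_mul c).neg
    have h3 := (h2.exp.div_const c).neg
    rw [Pi.neg_def] at h3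
    refine h3.congr_deriv ?_
    rw [mul_neg, neg_div, neg_neg, mul_div_assoc, div_self hc.ne', mul_one]
  have hint : IntegrableOn (fun ξ : ℝ => Real.exp (-(c * ξ))) (Set.Ioi a) := by
    have := exp_neg_integrableOn_Ioi a hc
    simpa [neg_mul] using this
  have htend : Filter.Tendsto (fun ξ : ℝ => -(Real.exp (-(c * ξ)) / c)) Filter.atTop
      (nhds 0) := by
    have h1 : Filter.Tendsto (fun ξ : ℝ => c * ξ) Filter.atTop Filter.atTop :=
      Filter.Tendsto.const_mul_atTop hc Filter.tendsto_id
    have h2 := ((Real.tendsto_exp_neg_atTop_nhds_zero.comp h1).div_const c).neg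
    simpa [Function.comp] using h2
  have := integral_Ioi_of_hasDerivAt_of_tendsto' hderiv hint htend
  rw [this]
  ring


/-- Moving an `Ici`-indicator into the domain of integration. -/
lemma aux_indicator_set {E : Type*} [NormedAddCommGroup E] [NormedSpace ℝ E]
    {a : ℝ} (ha : 0 ≤ a) (f : ℝ → E) :
    ∫ ξ in Set.Ioi (0:ℝ), (Set.Ici a).indicator f ξ = ∫ ξ in Set.Ioi a, f ξ := by
  rw [integral_indicator measurableSet_Ici, Measure.restrict_restrict measurableSet_Ici]
  rcases eq_or_lt_of_le ha with rfl | ha'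
  · congr 1
    rw [Set.inter_eq_right.mpr Set.Ioi_subset_Ici_self]
  · have : Set.Ici a ∩ Set.Ioi 0 = Set.Ici a := by
      rw [Set.inter_eq_left]
      intro x hx
      exact lt_of_lt_of_le ha' hx
    rw [this, integral_Ici_eq_integral_Ioi]

lemma aux_real_phi_int {c : ℝ} (hc : 0 < c) :
    IntegrableOn (fun q : ℝ => Real.exp (-(c * (q - Real.log q - 1)))) (Set.Ioi 0) := by
  have h := (aux_int_rpow_exp (by linarith : (-1:ℝ) < c) hc).const_mul (Real.exp c)
  apply (integrableOn_congr_fun ?_ measurableSet_Ioi).2 h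
  intro q hq
  simp only [Set.mem_Ioi] at hq
  show Real.exp (-(c * (q - Real.log q - 1))) = Real.exp c * (q ^ c * Real.exp (-(c * q)))
  have h1 : -(c * (q - Real.log q - 1)) = c * Real.log q + (-(c * q) + c) := by ring
  rw [h1, Real.exp_add, Real.exp_add, mul_comm c (Real.log q), ← Real.rpow_def_of_pos hq]
  ring

theorem minor_laplace_repr (qm qp : ℝ → ℝ)
    (hroots : ∀ ξ : ℝ, 0 < ξ →
      0 < qm ξ ∧ qm ξ < qp ξ ∧
      qm ξ - Real.log (qm ξ) - 1 = ξ ∧ qp ξ - Real.log (qp ξ) - 1 = ξ ∧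
      ∀ q : ℝ, 0 < q → q - Real.log q - 1 = ξ → q = qm ξ ∨ q = qp ξ)
    (z : ℂ) (hz : 0 < z.re) :
    (Real.sqrt (2 * Real.pi) : ℂ) * z ^ (-(3/2 : ℂ)) *
        (Complex.Gamma z /
          ((Real.sqrt (2 * Real.pi) : ℂ) * z ^ (z - 1/2) * Complex.exp (-z))) =
      ∫ ξ in Set.Ioi (0 : ℝ),
        Complex.exp (-z * ξ) * ((qp ξ : ℂ) - (qm ξ : ℂ)) := by
  have hz0 : z ≠ 0 := by
    intro h; rw [h] at hz; simp at hz
  -- the product-space function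
  set μ : Measure ℝ := volume.restrict (Set.Ioi 0) with hμ
  set s : Set (ℝ × ℝ) := {p : ℝ × ℝ | p.2 - Real.log p.2 - 1 ≤ p.1} with hs
  have hφmeas : Measurable fun q : ℝ => q - Real.log q - 1 :=
    (measurable_id.sub Real.measurable_log).sub measurable_const
  have hsm : MeasurableSet s :=
    measurableSet_le (hφmeas.comp measurable_snd) measurable_fst
  set F : ℝ × ℝ → ℂ := s.indicator (fun p => Complex.exp (-(z * p.1))) with hF
  -- sections in ξ
  have hsec : ∀ q : ℝ, (fun ξ => F (ξ, q)) =
      (Set.Ici (q - Real.log q - 1)).indicator (fun ξ => Complex.exp (-(z * ξ))) := by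
    intro q
    funext ξ
    simp only [hF, Set.indicator, hs, Set.mem_setOf_eq, Set.mem_Ici]
  -- measurability of F
  have hFmeas : AEStronglyMeasurable F (μ.prod μ) := by
    apply AEStronglyMeasurable.indicator ?_ hsm
    apply Continuous.aestronglyMeasurable
    continuity
  -- per-q integrability of ξ-sections
  have hsecInt : ∀ q : ℝ, Integrable (fun ξ => F (ξ, q)) μ := by
    intro q
    rw [hsec q]
    exact (aux_cexp_int hz 0).indicator measurableSet_Ici
  -- value of the ξ-section integrals of the norm
  have hsecNormVal : ∀ q : ℝ, 0 < q →
      (∫ ξ, ‖F (ξ, q)‖ ∂μ) = Real.exp (-(z.re * (q - Real.log q - 1))) / z.re := by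
    intro q hq
    have h1 : (fun ξ => ‖F (ξ, q)‖) =
        (Set.Ici (q - Real.log q - 1)).indicator
          (fun ξ => Real.exp (-(z.re * ξ))) := by
      funext ξ
      rw [show F (ξ, q) = _ from congrFun (hsec q) ξ, norm_indicator_eq_indicator_norm]
      congr 1
      funext t
      exact aux_cexp_norm z t
    rw [h1, hμ, aux_indicator_set (aux_phi_nonneg hq), aux_rexp_Ioi hz]
  -- integrability of the section-norm integrals
  have hsecNormInt : Integrable (fun q => ∫ ξ, ‖F (ξ, q)‖ ∂μ) μ := by
    have h2 : IntegrableOn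
        (fun q : ℝ => Real.exp (-(z.re * (q - Real.log q - 1))) / z.re)
        (Set.Ioi 0) := (aux_real_phi_int hz).div_const _
    apply h2.congr ?_
    rw [hμ, EventuallyEq]
    filter_upwards [ae_restrict_mem measurableSet_Ioi] with q hq
    exact (hsecNormVal q hq).symm
  -- integrability of F on the product
  have hFint : Integrable F (μ.prod μ) := by
    rw [integrable_prod_iff' hFmeas]
    exact ⟨Filter.Eventually.of_forall hsecInt, hsecNormInt⟩
  -- Fubini
  have hswap : ∫ ξ, (∫ q, F (ξ, q) ∂μ) ∂μ = ∫ q, (∫ ξ, F (ξ, q) ∂μ) ∂μ :=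
    integral_integral_swap hFint
  -- Step A : RHS of goal equals the iterated integral (ξ outer)
  have hA : (∫ ξ in Set.Ioi (0 : ℝ),
      Complex.exp (-z * ξ) * ((qp ξ : ℂ) - (qm ξ : ℂ))) =
      ∫ ξ, (∫ q, F (ξ, q) ∂μ) ∂μ := by
    rw [hμ]
    apply setIntegral_congr_ae measurableSet_Ioi
    filter_upwards with ξ hξ
    obtain ⟨hm, hlt, em, ep, _⟩ := hroots ξ hξ
    obtain ⟨hm1, hp1, hiff⟩ := aux_interval hξ hm hlt em ep
    have hFsec : (fun q => F (ξ, q)) =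
        {q : ℝ | q - Real.log q - 1 ≤ ξ}.indicator
          (fun _ => Complex.exp (-(z * ξ))) := by
      funext q
      simp only [hF, Set.indicator, hs, Set.mem_setOf_eq]
    have hsetm : MeasurableSet {q : ℝ | q - Real.log q - 1 ≤ ξ} :=
      measurableSet_le hφmeas measurable_const
    rw [hFsec, integral_indicator hsetm,
      Measure.restrict_restrict hsetm]
    have hseteq : {q : ℝ | q - Real.log q - 1 ≤ ξ} ∩ Set.Ioi 0 =
        Set.Icc (qm ξ) (qp ξ) := by
      ext q
      simp only [Set.mem_inter_iff, Set.mem_setOf_eq, Set.mem_Ioi]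
      constructor
      · rintro ⟨h1, h2⟩
        exact (hiff q h2).1 h1
      · intro h
        have hq0 : 0 < q := lt_of_lt_of_le hm h.1
        exact ⟨(hiff q hq0).2 h, hq0⟩
    rw [hseteq, setIntegral_const, Real.volume_real_Icc_of_le hlt.le]
    rw [real_smul]
    push_cast
    ring
  -- Step B : inner ξ-integral for fixed q
  have hB : ∀ q : ℝ, 0 < q → (∫ ξ, F (ξ, q) ∂μ) =
      Complex.exp (-(z * ((q : ℝ) - Real.log q - 1))) / z := by
    intro q hq
    rw [hsec q, hμ, aux_indicator_set (aux_phi_nonneg hq), aux_cexp_Ioi hz]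
    norm_cast
  -- Step C : compute the q-outer iterated integral
  have hC : ∫ q, (∫ ξ, F (ξ, q) ∂μ) ∂μ =
      Complex.exp z * (Complex.Gamma (z + 1) * z ^ (-(z + 1))) / z := by
    rw [hμ]
    have h1 : ∫ q in Set.Ioi (0:ℝ), (∫ ξ, F (ξ, q) ∂μ) =
        ∫ q in Set.Ioi (0:ℝ),
          Complex.exp z * ((q : ℂ) ^ z * Complex.exp (-(z * q))) / z := by
      apply setIntegral_congr_ae measurableSet_Ioi
      filter_upwards with q hq
      rw [hB q hq]
      congr 1
      rw [Complex.cpow_def_of_ne_zero (by exact_mod_cast hq.ne' : (q:ℂ) ≠ 0),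
        ← Complex.ofReal_log hq.le, ← Complex.exp_add, ← Complex.exp_add]
      congr 1
      push_cast
      ring
    rw [h1]
    have h2 : ∀ q : ℝ, Complex.exp z * ((q:ℂ) ^ z * Complex.exp (-(z * q))) / z =
        (Complex.exp z / z) * ((q:ℂ) ^ z * Complex.exp (-(z * q))) := fun q => by ring
    simp_rw [h2]
    rw [integral_const_mul, aux_gamma_scale hz z hz]
    ring
  -- put everything together
  rw [hA, hswap, hC]
  -- final algebra
  rw [Complex.Gamma_add_one z hz0]
  have hsq : ((Real.sqrt (2 * Real.pi) : ℝ) : ℂ) ≠ 0 := by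
    rw [Complex.ofReal_ne_zero]
    positivity
  have hcp : z ^ (z - 1/2 : ℂ) ≠ 0 := by
    rw [Ne, Complex.cpow_eq_zero_iff]
    tauto
  have hkey : z ^ (-(3/2 : ℂ)) = z ^ (-(z+1)) * z ^ (z - 1/2 : ℂ) := by
    rw [← Complex.cpow_add _ _ hz0]
    congr 1
    ring
  rw [hkey]
  have final : ∀ a g c b : ℂ, a ≠ 0 → c ≠ 0 →
      a * (b * c) * (g / (a * c * Complex.exp (-z))) = Complex.exp z * (z * g * b) / z := by
    intro a g c b ha hc
    rw [Complex.exp_neg]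
    field_simp
  exact final _ _ _ _ hsq hcp
end

section
/- The function ξ ↦ ξ^{-2}((ξ/2)·coth(ξ/2) - 1), a priori defined for 0 < |ξ| < 2π, extends to a meromorphic function on ℂ, holomorphic at 0, whose poles are exactly the points of 2πi·ℤ \ {0}, and all these poles are simple. -/
section BorelStirlingAux
open Complex Function

noncomputable def E1 : ℂ → ℂ := dslope Complex.exp 0
noncomputable def E2 : ℂ → ℂ := dslope E1 0
noncomputable def E3 : ℂ → ℂ := dslope E2 0

lemma diff_E1 : Differentiable ℂ E1 := by
  rw [← differentiableOn_univ]
  exact (Complex.differentiableOn_dslope Filter.univ_mem).mpr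
    Complex.differentiable_exp.differentiableOn

lemma diff_E2 : Differentiable ℂ E2 := by
  rw [← differentiableOn_univ]
  exact (Complex.differentiableOn_dslope Filter.univ_mem).mpr diff_E1.differentiableOn

lemma diff_E3 : Differentiable ℂ E3 := by
  rw [← differentiableOn_univ]
  exact (Complex.differentiableOn_dslope Filter.univ_mem).mpr diff_E2.differentiableOn

lemma exp_fps : HasFPowerSeriesAt Complex.exp (NormedSpace.expSeries ℂ ℂ) 0 := by
  rw [Complex.exp_eq_exp_ℂ]; exact NormedSpace.exp_hasFPowerSeriesAt_zero

lemma expSeries_coeff (n : ℕ) : (NormedSpace.expSeries ℂ ℂ).coeff n = (n.factorial : ℂ)⁻¹ := by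
  show (NormedSpace.expSeries ℂ ℂ n) (fun _ => (1:ℂ)) = _
  rw [NormedSpace.expSeries_apply_eq]
  simp

lemma E3_eq_iterate : E3 = (swap dslope 0)^[3] Complex.exp := by
  simp only [Function.iterate_succ_apply', Function.iterate_zero_apply, swap]
  rfl

lemma E3_fps : HasFPowerSeriesAt E3 (FormalMultilinearSeries.fslope^[3] (NormedSpace.expSeries ℂ ℂ)) 0 := by
  rw [E3_eq_iterate]
  exact HasFPowerSeriesAt.has_fpower_series_iterate_dslope_fslope 3 exp_fps

lemma E3_zero : E3 0 = 1/6 := by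
  have h : (FormalMultilinearSeries.fslope^[3] (NormedSpace.expSeries ℂ ℂ)).coeff 0 = E3 0 :=
    E3_fps.coeff_zero 1
  rw [FormalMultilinearSeries.coeff_iterate_fslope, expSeries_coeff] at h
  rw [h.symm]
  norm_num [Nat.factorial]

lemma E1_zero : E1 0 = 1 := by
  simp [E1, dslope_same, Complex.deriv_exp]

lemma E2_eq_iterate : E2 = (swap dslope 0)^[2] Complex.exp := by
  simp only [Function.iterate_succ_apply', Function.iterate_zero_apply, swap]
  rfl

lemma E2_fps : HasFPowerSeriesAt E2 (FormalMultilinearSeries.fslope^[2] (NormedSpace.expSeries ℂ ℂ)) 0 := by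
  rw [E2_eq_iterate]
  exact HasFPowerSeriesAt.has_fpower_series_iterate_dslope_fslope 2 exp_fps

lemma E2_zero : E2 0 = 1/2 := by
  have h : (FormalMultilinearSeries.fslope^[2] (NormedSpace.expSeries ℂ ℂ)).coeff 0 = E2 0 :=
    E2_fps.coeff_zero 1
  rw [FormalMultilinearSeries.coeff_iterate_fslope, expSeries_coeff] at h
  rw [h.symm]
  norm_num [Nat.factorial]

lemma diff_dslope {h : ℂ → ℂ} (hd : Differentiable ℂ h) (p : ℂ) :
    Differentiable ℂ (dslope h p) := by
  rw [← differentiableOn_univ]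
  exact (Complex.differentiableOn_dslope Filter.univ_mem).mpr hd.differentiableOn

lemma analytic_of_diff {h : ℂ → ℂ} (hd : Differentiable ℂ h) (z : ℂ) : AnalyticAt ℂ h z :=
  Complex.analyticAt_iff_eventually_differentiableAt.mpr
    (Filter.Eventually.of_forall fun w => hd w)

noncomputable def NN : ℂ → ℂ := fun ξ => ξ + (ξ/2 - 1) * (Complex.exp ξ - 1)

noncomputable def ff : ℂ → ℂ :=
  fun ξ => if ξ = 0 then 1/12 else NN ξ / (ξ^2 * (Complex.exp ξ - 1))

lemma diff_NN : Differentiable ℂ NN := by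
  unfold NN
  fun_prop

lemma exp_expand (ξ : ℂ) : Complex.exp ξ = 1 + ξ + ξ^2/2 + ξ^3 * E3 ξ := by
  rcases eq_or_ne ξ 0 with rfl | h
  · simp
  · have e1 : E1 ξ = (Complex.exp ξ - 1) / ξ := by
      rw [E1, dslope_of_ne _ h, slope]
      simp [Complex.exp_zero, div_eq_inv_mul]
    have e2 : E2 ξ = (E1 ξ - 1) / ξ := by
      rw [E2, dslope_of_ne _ h, slope, E1_zero]
      simp [div_eq_inv_mul]
    have e3 : E3 ξ = (E2 ξ - 1/2) / ξ := by
      rw [E3, dslope_of_ne _ h, slope, E2_zero]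
      simp [div_eq_inv_mul]
    rw [eq_div_iff h] at e1 e2 e3
    linear_combination -e1 - ξ * e2 - ξ^2 * e3

noncomputable def RR : ℂ → ℂ := fun ξ => (1/4 - E3 ξ + ξ/2 * E3 ξ) / E1 ξ

lemma ff_eq_RR {ξ : ℂ} (hξ : ξ ≠ 0) : ff ξ = RR ξ := by
  have hnum : NN ξ = ξ^3 * (1/4 - E3 ξ + ξ/2 * E3 ξ) := by
    simp only [NN]
    rw [exp_expand ξ]
    ring
  have hE1 : E1 ξ = (Complex.exp ξ - 1) / ξ := by
    rw [E1, dslope_of_ne _ hξ, slope]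
    simp [Complex.exp_zero, div_eq_inv_mul]
  have hden : ξ^2 * (Complex.exp ξ - 1) = ξ^3 * E1 ξ := by
    rw [hE1]
    field_simp
  rw [ff]
  simp only [if_neg hξ]
  rw [hnum, hden, RR, mul_div_mul_left _ _ (pow_ne_zero 3 hξ)]

lemma RR_zero : RR 0 = 1/12 := by
  rw [RR]
  simp only [E3_zero, E1_zero]
  norm_num

lemma RR_analytic : AnalyticAt ℂ RR 0 := by
  apply AnalyticAt.div
  · exact ((analyticAt_const.sub (analytic_of_diff diff_E3 0)).add
      (((analyticAt_id).div analyticAt_const (by norm_num)).mul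
        (analytic_of_diff diff_E3 0)))
  · exact analytic_of_diff diff_E1 0
  · rw [E1_zero]; norm_num

lemma exp_ne_one {ξ : ℂ} (h0 : ξ ≠ 0) (h : ‖ξ‖ < 2 * Real.pi) : Complex.exp ξ ≠ 1 := by
  intro he
  rcases Complex.exp_eq_one_iff.mp he with ⟨n, hn⟩
  have hnorm : ‖ξ‖ = |(n : ℝ)| * (2 * Real.pi) := by
    rw [hn]
    rw [norm_mul, norm_mul, norm_mul, Complex.norm_I, Complex.norm_intCast,
      Complex.norm_ofNat, Complex.norm_real, Real.norm_eq_abs,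
      _root_.abs_of_nonneg Real.pi_pos.le]
    ring
  have hpi : (0:ℝ) < 2 * Real.pi := by positivity
  have habs : |(n:ℝ)| < 1 := by
    rw [hnorm] at h
    nlinarith
  have hn0 : n = 0 := by
    rw [← Int.cast_abs] at habs
    have : |n| < 1 := by exact_mod_cast habs
    rw [abs_lt] at this
    omega
  apply h0
  rw [hn, hn0]
  simp

lemma ff_analytic_zero : AnalyticAt ℂ ff 0 := by
  apply RR_analytic.congr
  have hmem : Metric.ball (0:ℂ) (2*Real.pi) ∈ nhds (0:ℂ) :=
    Metric.ball_mem_nhds _ (by positivity)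
  filter_upwards [hmem] with ξ hξ
  rcases eq_or_ne ξ 0 with rfl | h
  · rw [RR_zero, ff]; simp
  · exact (ff_eq_RR h).symm

lemma exp_half_sq (ξ : ℂ) : Complex.exp (ξ/2) ^ 2 = Complex.exp ξ := by
  rw [sq, ← Complex.exp_add]
  norm_num

lemma formula {ξ : ℂ} (h0 : 0 < ‖ξ‖) (h2 : ‖ξ‖ < 2 * Real.pi) :
    ff ξ = ξ ^ (-2 : ℤ) * (ξ / 2 * (Complex.cosh (ξ / 2) / Complex.sinh (ξ / 2)) - 1) := by
  have hξ : ξ ≠ 0 := by simpa using h0.ne'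
  have hexp : Complex.exp ξ ≠ 1 := exp_ne_one hξ h2
  set u := Complex.exp (ξ/2) with hu
  have hune : u ≠ 0 := Complex.exp_ne_zero _
  have husq : u ^ 2 = Complex.exp ξ := exp_half_sq ξ
  have hsum : u^2 - 1 ≠ 0 := by
    rw [husq]; exact sub_ne_zero.mpr hexp
  have hsinh : Complex.sinh (ξ/2) = (u - u⁻¹)/2 := by
    rw [Complex.sinh, Complex.exp_neg]
  have hcosh : Complex.cosh (ξ/2) = (u + u⁻¹)/2 := by
    rw [Complex.cosh, Complex.exp_neg]
  have hsne : Complex.sinh (ξ/2) ≠ 0 := by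
    rw [hsinh]
    intro hc
    apply hsum
    field_simp at hc
    rw [hc]
    ring
  have hzpow : ξ ^ (-2 : ℤ) = (ξ^2)⁻¹ := by
    rw [zpow_neg]
    norm_cast
  simp only [ff, NN, if_neg hξ]
  have husub : u - u⁻¹ ≠ 0 := by
    intro hc
    apply hsum
    field_simp at hc
    rw [hc]
    ring
  rw [hzpow, hsinh, hcosh, ← husq]
  field_simp [hune, hξ, hsum, husub]
  have hX : (-2 + u^2*2 : ℂ) ≠ 0 := fun hc => hsum (by linear_combination hc/2)
  have hXc : (-2 + u^2*2 : ℂ) * (-2 + u^2*2 : ℂ)⁻¹ = 1 := mul_inv_cancel₀ hX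
  ring

lemma ff_analytic {ξ : ℂ} (h : ∀ n : ℤ, n ≠ 0 → ξ ≠ 2 * Real.pi * Complex.I * n) :
    AnalyticAt ℂ ff ξ := by
  rcases eq_or_ne ξ 0 with rfl | hξ0
  · exact ff_analytic_zero
  · have hexp : Complex.exp ξ ≠ 1 := by
      intro he
      rcases Complex.exp_eq_one_iff.mp he with ⟨n, hn⟩
      have hn0 : n ≠ 0 := by rintro rfl; rw [hn] at hξ0; simp at hξ0
      exact h n hn0 (by rw [hn]; ring)
    have hden : ξ^2 * (Complex.exp ξ - 1) ≠ 0 :=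
      mul_ne_zero (pow_ne_zero 2 hξ0) (sub_ne_zero.mpr hexp)
    have hA : AnalyticAt ℂ (fun z => NN z / (z^2 * (Complex.exp z - 1))) ξ :=
      (analytic_of_diff diff_NN ξ).div
        ((analyticAt_id.pow 2).mul
          ((analytic_of_diff Complex.differentiable_exp ξ).sub analyticAt_const)) hden
    apply hA.congr
    filter_upwards [isOpen_compl_singleton.mem_nhds hξ0] with z hz
    simp only [Set.mem_compl_iff, Set.mem_singleton_iff] at hz
    simp only [ff, if_neg hz]

lemma ff_pole (n : ℤ) (hn : n ≠ 0) :
    ∃ g : ℂ → ℂ, AnalyticAt ℂ g (2 * Real.pi * Complex.I * n) ∧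
      g (2 * Real.pi * Complex.I * n) ≠ 0 ∧
      ∀ᶠ ξ in nhdsWithin (2 * Real.pi * Complex.I * n) {(2 * Real.pi * Complex.I * n)}ᶜ,
        ff ξ = g ξ / (ξ - 2 * Real.pi * Complex.I * n) := by
  set p : ℂ := 2 * Real.pi * Complex.I * n with hp
  have hp0 : p ≠ 0 := by
    simp only [hp, mul_ne_zero_iff]
    refine ⟨⟨⟨two_ne_zero, ?_⟩, Complex.I_ne_zero⟩, ?_⟩
    · exact Complex.ofReal_ne_zero.mpr Real.pi_ne_zero
    · exact_mod_cast hn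
  have hexpp : Complex.exp p = 1 := Complex.exp_eq_one_iff.mpr ⟨n, by rw [hp]; ring⟩
  set Q : ℂ → ℂ := dslope Complex.exp p with hQ
  have hQdiff : Differentiable ℂ Q := diff_dslope Complex.differentiable_exp p
  have hQp : Q p = 1 := by rw [hQ, dslope_same, Complex.deriv_exp, hexpp]
  have hkey : ∀ ξ : ℂ, Complex.exp ξ - 1 = (ξ - p) * Q ξ := by
    intro ξ
    rcases eq_or_ne ξ p with rfl | hne
    · simp [hexpp]
    · rw [hQ, dslope_of_ne _ hne, slope, hexpp, smul_eq_mul, vsub_eq_sub]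
      field_simp [sub_ne_zero.mpr hne]
  refine ⟨fun ξ => NN ξ / (ξ^2 * Q ξ), ?_, ?_, ?_⟩
  · refine (analytic_of_diff diff_NN p).div
      ((analyticAt_id.pow 2).mul (analytic_of_diff hQdiff p)) ?_
    rw [hQp, mul_one]
    exact pow_ne_zero 2 hp0
  · have hNNp : NN p = p := by simp [NN, hexpp]
    simp only [hNNp, hQp, mul_one]
    exact div_ne_zero hp0 (pow_ne_zero 2 hp0)
  · have h1 : {(0:ℂ)}ᶜ ∈ nhdsWithin p {p}ᶜ :=
      nhdsWithin_le_nhds (isOpen_compl_singleton.mem_nhds hp0)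
    filter_upwards [h1, self_mem_nhdsWithin] with ξ hξ0 hξp
    simp only [Set.mem_compl_iff, Set.mem_singleton_iff] at hξ0 hξp
    simp only [ff, if_neg hξ0]
    rw [hkey ξ, div_div]
    congr 1
    ring


end BorelStirlingAux


open Complex

theorem borel_stirling_meromorphic_continuation :
    ∃ f : ℂ → ℂ,
      (∀ ξ : ℂ, 0 < ‖ξ‖ → ‖ξ‖ < 2 * Real.pi →
        f ξ = ξ ^ (-2 : ℤ) * (ξ / 2 * (Complex.cosh (ξ / 2) / Complex.sinh (ξ / 2)) - 1)) ∧
      AnalyticAt ℂ f 0 ∧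
      (∀ ξ : ℂ, (∀ n : ℤ, n ≠ 0 → ξ ≠ 2 * Real.pi * Complex.I * n) → AnalyticAt ℂ f ξ) ∧
      (∀ n : ℤ, n ≠ 0 →
        ∃ g : ℂ → ℂ, AnalyticAt ℂ g (2 * Real.pi * Complex.I * n) ∧
          g (2 * Real.pi * Complex.I * n) ≠ 0 ∧
          ∀ᶠ ξ in nhdsWithin (2 * Real.pi * Complex.I * n) {(2 * Real.pi * Complex.I * n)}ᶜ,
            f ξ = g ξ / (ξ - 2 * Real.pi * Complex.I * n)) := by
  exact ⟨ff, fun _ h1 h2 => formula h1 h2, ff_analytic_zero, fun _ h => ff_analytic h, ff_pole⟩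
end

section
/- For every complex c with Re(c) < 1/2 and every ξ ∈ ℂ \ ℝ_{≤0}, the integral ∫_ℝ (ξ + e^Q - Q - 1)^{c - 3/2} dQ converges absolutely, where powers use the principal branch. -/
open MeasureTheory

lemma aux_delta (ξ : ℂ) (hξ : ∀ x : ℝ, x ≤ 0 → ξ ≠ x) :
    ∃ δ : ℝ, 0 < δ ∧ ∀ t : ℝ, 0 ≤ t → δ * (1 + t) ≤ ‖ξ + t‖ := by
  have hξ0 : ξ ≠ 0 := by simpa using hξ 0 le_rfl
  have habsξ : 0 < ‖ξ‖ := by simpa using hξ0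
  by_cases hre : 0 ≤ ξ.re
  · refine ⟨min (‖ξ‖) 1 / 2, by positivity, fun t ht => ?_⟩
    have h1 : ‖ξ‖ ≤ ‖ξ + t‖ := by
      have hsq : (‖ξ‖) ^ 2 ≤ (‖ξ + t‖) ^ 2 := by
        rw [Complex.sq_norm, Complex.sq_norm]
        simp only [Complex.normSq_apply, Complex.add_re, Complex.add_im,
          Complex.ofReal_re, Complex.ofReal_im, add_zero]
        nlinarith
      nlinarith [norm_nonneg (ξ + t)]
    have h2 : t ≤ ‖ξ + t‖ := by
      have := Complex.re_le_norm (ξ + t)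
      simp only [Complex.add_re, Complex.ofReal_re] at this
      linarith
    have hm1 : min (‖ξ‖) 1 ≤ ‖ξ‖ := min_le_left _ _
    have hm2 : min (‖ξ‖) 1 ≤ 1 := min_le_right _ _
    nlinarith
  · have him : ξ.im ≠ 0 := by
      intro h
      exact hξ ξ.re (le_of_not_ge hre) (Complex.ext (by simp) (by simp [h]))
    have him' : 0 < |ξ.im| := abs_pos.mpr him
    refine ⟨min (|ξ.im| / (2 + 2 * ‖ξ‖)) (1 / 2), by positivity, fun t ht => ?_⟩
    have h1 : |ξ.im| ≤ ‖ξ + t‖ := by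
      have := Complex.abs_im_le_norm (ξ + t)
      simpa using this
    have h2 : t - ‖ξ‖ ≤ ‖ξ + t‖ := by
      have htr : ‖(ξ + t) + (-ξ)‖ ≤ ‖ξ + t‖ + ‖-ξ‖ :=
        norm_add_le _ _
      have heq : ξ + (t:ℂ) + -ξ = (t:ℂ) := by ring
      rw [heq, Complex.norm_real, Real.norm_eq_abs, abs_of_nonneg ht] at htr
      have : ‖-ξ‖ = ‖ξ‖ := by simp
      linarith
    have hpos : (0 : ℝ) < 2 + 2 * ‖ξ‖ := by positivity
    rcases le_or_gt t (1 + 2 * ‖ξ‖) with h | h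
    · have hm1 : min (|ξ.im| / (2 + 2 * ‖ξ‖)) (1 / 2) ≤
          |ξ.im| / (2 + 2 * ‖ξ‖) := min_le_left _ _
      have key : (|ξ.im| / (2 + 2 * ‖ξ‖)) * (1 + t) ≤ |ξ.im| := by
        rw [div_mul_eq_mul_div, div_le_iff₀ hpos]
        nlinarith
      have hmin0 : (0:ℝ) < min (|ξ.im| / (2 + 2 * ‖ξ‖)) (1 / 2) := by positivity
      nlinarith
    · have hm2 : min (|ξ.im| / (2 + 2 * ‖ξ‖)) (1 / 2) ≤ 1 / 2 := min_le_right _ _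
      have hmin0 : (0:ℝ) < min (|ξ.im| / (2 + 2 * ‖ξ‖)) (1 / 2) := by positivity
      nlinarith

theorem real_major_integrand_integrable (c : ℂ) (hc : c.re < 1/2)
    (ξ : ℂ) (hξ : ∀ x : ℝ, x ≤ 0 → ξ ≠ x) :
    Integrable (fun Q : ℝ =>
      (ξ + Real.exp Q - Q - 1) ^ (c - 3/2 : ℂ)) := by
  obtain ⟨δ, hδ, hδle⟩ := aux_delta ξ hξ
  set s : ℂ := c - 3/2 with hs
  have hsre : s.re = c.re - 3/2 := by
    simp [hs, Complex.sub_re]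
  have hσ : s.re < -1 := by rw [hsre]; linarith
  set t : ℝ → ℝ := fun Q => Real.exp Q - Q - 1 with htdef
  have ht0 : ∀ Q, 0 ≤ t Q := by
    intro Q
    have := Real.add_one_le_exp Q
    simp only [htdef]
    linarith
  have hw : ∀ Q : ℝ, ξ + (Real.exp Q : ℂ) - (Q : ℂ) - 1 = ξ + ((t Q : ℝ) : ℂ) := by
    intro Q
    simp only [htdef]
    push_cast
    ring
  have hwa : ∀ Q, 0 < ‖ξ + ((t Q : ℝ) : ℂ)‖ := by
    intro Q
    refine lt_of_lt_of_le ?_ (hδle (t Q) (ht0 Q))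
    have := ht0 Q
    nlinarith
  have hslit : ∀ Q : ℝ, (ξ + ((t Q : ℝ) : ℂ)) ∈ Complex.slitPlane := by
    intro Q
    rw [Complex.mem_slitPlane_iff]
    by_cases him : ξ.im = 0
    · left
      have hreξ : 0 < ξ.re := by
        by_contra hle
        exact hξ ξ.re (le_of_not_gt hle) (Complex.ext (by simp) (by simp [him]))
      simp only [Complex.add_re, Complex.ofReal_re]
      have := ht0 Q
      linarith
    · right
      simpa using him
  have hlow : ∀ Q : ℝ, (1 + |Q|) / 2 ≤ 1 + t Q := by
    intro Q
    rcases le_or_gt Q 0 with h | h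
    · rw [abs_of_nonpos h]
      have h1 := Real.add_one_le_exp Q
      have h2 := Real.exp_pos Q
      simp only [htdef]
      linarith
    · rw [abs_of_pos h]
      have h1 : 1 + Q / 2 ≤ Real.exp (Q / 2) := by
        have := Real.add_one_le_exp (Q / 2); linarith
      have h2 : Real.exp (Q / 2) * Real.exp (Q / 2) = Real.exp Q := by
        rw [← Real.exp_add]; ring_nf
      simp only [htdef]
      nlinarith [Real.exp_pos (Q / 2), sq_nonneg (Q - 1)]
  have hfun : (fun Q : ℝ => (ξ + Real.exp Q - Q - 1) ^ (c - 3/2 : ℂ))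
      = fun Q : ℝ => (ξ + ((t Q : ℝ) : ℂ)) ^ s := by
    funext Q
    rw [← hs, hw Q]
  rw [hfun]
  set C : ℝ := Real.exp (Real.pi * |s.im|) * (δ / 2) ^ s.re with hC
  have hint : Integrable (fun Q : ℝ => C * (1 + ‖Q‖) ^ s.re) := by
    have h1 : ((Module.finrank ℝ ℝ : ℝ)) < -s.re := by
      simp only [Module.finrank_self, Nat.cast_one]
      linarith
    have := (integrable_one_add_norm (E := ℝ) (μ := volume) h1).const_mul C
    simpa using this
  have hcont : Continuous fun Q : ℝ => (ξ + ((t Q : ℝ) : ℂ)) ^ s := by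
    have hbase : Continuous fun Q : ℝ => ξ + ((t Q : ℝ) : ℂ) := by
      apply continuous_const.add
      exact Complex.continuous_ofReal.comp
        ((Real.continuous_exp.sub continuous_id).sub continuous_const)
    rw [continuous_iff_continuousAt]
    intro Q
    exact hbase.continuousAt.cpow continuousAt_const (hslit Q)
  refine hint.mono' hcont.aestronglyMeasurable (Filter.Eventually.of_forall fun Q => ?_)
  set w : ℂ := ξ + ((t Q : ℝ) : ℂ) with hwdef
  have hle : (δ / 2) * (1 + |Q|) ≤ ‖w‖ :=
    calc (δ / 2) * (1 + |Q|) = δ * ((1 + |Q|) / 2) := by ring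
      _ ≤ δ * (1 + t Q) := mul_le_mul_of_nonneg_left (hlow Q) hδ.le
      _ ≤ ‖w‖ := hδle (t Q) (ht0 Q)
  have hpos2 : (0 : ℝ) < (δ / 2) * (1 + |Q|) := by positivity
  calc ‖w ^ s‖ = ‖w ^ s‖ := rfl
    _ ≤ ‖w‖ ^ s.re / Real.exp (Complex.arg w * s.im) := Complex.norm_cpow_le w s
    _ ≤ ‖w‖ ^ s.re * Real.exp (Real.pi * |s.im|) := by
        rw [div_eq_mul_inv]
        apply mul_le_mul_of_nonneg_left _ (Real.rpow_nonneg (norm_nonneg w) _)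
        rw [← Real.exp_neg]
        apply Real.exp_le_exp.mpr
        have h1 : |Complex.arg w * s.im| ≤ Real.pi * |s.im| := by
          rw [abs_mul]
          exact mul_le_mul_of_nonneg_right (Complex.abs_arg_le_pi w) (abs_nonneg _)
        have h2 := neg_abs_le (Complex.arg w * s.im)
        linarith
    _ ≤ ((δ / 2) * (1 + |Q|)) ^ s.re * Real.exp (Real.pi * |s.im|) := by
        apply mul_le_mul_of_nonneg_right _ (Real.exp_pos _).le
        exact Real.rpow_le_rpow_of_nonpos hpos2 hle (by linarith)
    _ = C * (1 + ‖Q‖) ^ s.re := by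
        rw [Real.mul_rpow (by linarith : (0:ℝ) ≤ δ / 2) (by positivity : (0:ℝ) ≤ 1 + |Q|), hC,
          Real.norm_eq_abs]
        ring
end
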